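/- arXiv:0801.0438 — 4 statements merged into one kernel-verified Lean document; each statement's English description precedes it below -/
import Mathlib

section
/- Let A be a positive semidefinite d×d complex matrix with operator norm at most 1. Then the kernel k(z,w) = (1 - ⟨A^{1/2} z, A^{1/2} w⟩)/(1 - ⟨z,w⟩) on the open unit ball of C^d is positive semidefinite: for any finite set of points z^{(1)},...,z^{(n)} in the ball and scalars c_1,...,c_n, one has ∑_{i,j} c_i \overline{c_j} k(z^{(i)}, z^{(j)}) ≥ 0. -/
open scoped ComplexOrder

/-- The positive semidefinite square root of a positive semidefinite matrix
(the definition `Matrix.PosSemidef.sqrt` of the older Mathlib, removed since). -/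
noncomputable def Matrix.PosSemidef.sqrt {n : Type*} [Fintype n] [DecidableEq n] {𝕜 : Type*}
    [RCLike 𝕜] {A : Matrix n n 𝕜} (hA : A.PosSemidef) : Matrix n n 𝕜 :=
  (hA.1.eigenvectorUnitary : Matrix n n 𝕜) *
    Matrix.diagonal ((↑) ∘ (fun x : ℝ => Real.sqrt x) ∘ hA.1.eigenvalues) *
    (star hA.1.eigenvectorUnitary : Matrix n n 𝕜)

open Matrix

theorem Matrix.PosSemidef.posSemidef_sqrt {n : Type*} [Fintype n] [DecidableEq n]
    {A : Matrix n n ℂ} (hA : A.PosSemidef) : hA.sqrt.PosSemidef := by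
  unfold Matrix.PosSemidef.sqrt
  rw [Matrix.star_eq_conjTranspose]
  apply Matrix.PosSemidef.mul_mul_conjTranspose_same
  apply Matrix.PosSemidef.diagonal
  intro i
  simp only [Pi.zero_apply, Function.comp_apply]
  exact RCLike.ofReal_nonneg.mpr (Real.sqrt_nonneg _)

theorem Matrix.PosSemidef.sqrt_mul_self {n : Type*} [Fintype n] [DecidableEq n]
    {A : Matrix n n ℂ} (hA : A.PosSemidef) : hA.sqrt * hA.sqrt = A := by
  unfold Matrix.PosSemidef.sqrt
  conv_rhs => rw [hA.1.spectral_theorem]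
  rw [Unitary.conjStarAlgAut_apply]
  have hU := Unitary.coe_star_mul_self hA.1.eigenvectorUnitary
  rw [show ∀ a b c : Matrix n n ℂ, a * b * c * (a * b * c) = a * (b * (c * a) * b) * c from
    fun a b c => by simp only [mul_assoc], hU, mul_one, Matrix.diagonal_mul_diagonal]
  congr 2
  refine congrArg _ (funext fun i => ?_)
  simp only [Function.comp_apply]
  rw [← RCLike.ofReal_mul, Real.mul_self_sqrt (hA.eigenvalues_nonneg i)]

lemma gram_nonneg {n : ℕ} {ι : Type*} [Fintype ι] (v : Fin n → ι → ℂ) (c : Fin n → ℂ) :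
    0 ≤ ∑ i, ∑ j, c i * star (c j) * ∑ m, v i m * star (v j m) := by
  have h1 : ∀ f : Fin n → Fin n → ι → ℂ,
      ∑ i, ∑ j, ∑ m, f i j m = ∑ m, ∑ i, ∑ j, f i j m := fun f =>
    calc ∑ i, ∑ j, ∑ m, f i j m = ∑ i, ∑ m, ∑ j, f i j m :=
          Finset.sum_congr rfl fun i _ => Finset.sum_comm
      _ = ∑ m, ∑ i, ∑ j, f i j m := Finset.sum_comm
  have h : ∑ i, ∑ j, c i * star (c j) * ∑ m, v i m * star (v j m)
      = ∑ m, (∑ i, c i * v i m) * star (∑ i, c i * v i m) := by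
    simp_rw [Finset.mul_sum]
    rw [h1]
    refine Finset.sum_congr rfl fun m _ => ?_
    simp_rw [star_sum, star_mul', Finset.sum_mul_sum]
    exact Finset.sum_congr rfl fun i _ => Finset.sum_congr rfl fun j _ => by ring
  rw [h]
  exact Finset.sum_nonneg fun m _ => mul_star_self_nonneg _

lemma sq_dot {d : ℕ} (B : Matrix (Fin d) (Fin d) ℂ) (hB : B.IsHermitian)
    (x y : Fin d → ℂ) :
    ∑ m, (B.mulVec x) m * star ((B.mulVec y) m)
      = star y ⬝ᵥ (B * B).mulVec x := by
  have h1 : star (B.mulVec y) = Matrix.vecMul (star y) B := by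
    rw [Matrix.star_mulVec, hB.eq]
  calc ∑ m, (B.mulVec x) m * star ((B.mulVec y) m)
      = star (B.mulVec y) ⬝ᵥ B.mulVec x := by
        rw [dotProduct_comm]; rfl
    _ = (Matrix.vecMul (star y) B) ⬝ᵥ B.mulVec x := by rw [h1]
    _ = star y ⬝ᵥ (B * B).mulVec x := by
        rw [← Matrix.dotProduct_mulVec, ← Matrix.mulVec_mulVec]

lemma one_sub_psd {d : ℕ} (A : Matrix (Fin d) (Fin d) ℂ) (hA : A.PosSemidef)
    (hnorm : ‖Matrix.toEuclideanCLM (𝕜 := ℂ) A‖ ≤ 1) :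
    (1 - A).PosSemidef := by
  refine Matrix.posSemidef_iff_dotProduct_mulVec.mpr ⟨Matrix.isHermitian_one.sub hA.1, fun x => ?_⟩
  rw [Matrix.sub_mulVec, dotProduct_sub, Matrix.one_mulVec]
  rw [sub_nonneg]
  set X : EuclideanSpace ℂ (Fin d) := WithLp.toLp 2 x with hX
  have e1 : star x ⬝ᵥ x = (inner ℂ X X : ℂ) := by
    rw [EuclideanSpace.inner_toLp_toLp, dotProduct_comm]
  have e2 : star x ⬝ᵥ A.mulVec x
      = (inner ℂ X (Matrix.toEuclideanCLM (𝕜 := ℂ) A X) : ℂ) := by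
    rw [Matrix.toEuclideanCLM_toLp,
      EuclideanSpace.inner_toLp_toLp, dotProduct_comm]
  have hre : (star x ⬝ᵥ A.mulVec x).re ≤ (star x ⬝ᵥ x).re := by
    rw [e1, e2]
    have h2 := norm_inner_le_norm (𝕜 := ℂ) X (Matrix.toEuclideanCLM (𝕜 := ℂ) A X)
    have hop := (Matrix.toEuclideanCLM (𝕜 := ℂ) A).le_opNorm X
    have h3 : ‖(Matrix.toEuclideanCLM (𝕜 := ℂ) A) X‖ ≤ ‖X‖ := by
      nlinarith [norm_nonneg X, norm_nonneg (Matrix.toEuclideanCLM (𝕜 := ℂ) A)]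
    have h4 : (inner ℂ X (Matrix.toEuclideanCLM (𝕜 := ℂ) A X) : ℂ).re
        ≤ ‖(inner ℂ X (Matrix.toEuclideanCLM (𝕜 := ℂ) A X) : ℂ)‖ := Complex.re_le_norm _
    have h5 : (inner ℂ X X : ℂ) = (‖X‖:ℂ)^2 := inner_self_eq_norm_sq_to_K X
    rw [h5]
    have h6 : ((‖X‖:ℂ)^2).re = ‖X‖^2 := by
      norm_cast
    rw [h6]
    nlinarith [norm_nonneg X]
  have him : (star x ⬝ᵥ A.mulVec x).im = 0 := by
    have h6 := hA.dotProduct_mulVec_nonneg x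
    rw [Complex.le_def] at h6
    exact h6.2.symm
  have him2 : (star x ⬝ᵥ x).im = 0 := by
    rw [e1, inner_self_eq_norm_sq_to_K X]
    norm_cast
  rw [Complex.le_def]
  exact ⟨hre, him.trans him2.symm⟩

/-- If `A` is a positive semidefinite `d × d` complex matrix with
operator norm at most `1`, then the kernel
`k(z,w) = (1 - ⟨A^{1/2} z, A^{1/2} w⟩)/(1 - ⟨z,w⟩)` is positive semidefinite
on the open unit ball of `ℂ^d`.  (Here `0 ≤ ·` is the complex order, so the
conclusion asserts the sum is real and nonnegative.) -/
theorem sqrt_kernel_positive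
    (d : ℕ) (A : Matrix (Fin d) (Fin d) ℂ) (hA : A.PosSemidef)
    (hnorm : ‖Matrix.toEuclideanCLM (𝕜 := ℂ) A‖ ≤ 1)
    (n : ℕ) (z : Fin n → Fin d → ℂ)
    (hz : ∀ i, ∑ m, ‖z i m‖ ^ 2 < 1) (c : Fin n → ℂ) :
    0 ≤ ∑ i, ∑ j, c i * star (c j) *
        ((1 - ∑ m, (hA.sqrt.mulVec (z i)) m * star ((hA.sqrt.mulVec (z j)) m)) /
          (1 - ∑ m, z i m * star (z j m))) := by
  classical
  set S : Fin n → Fin n → ℂ := fun i j => ∑ m, z i m * star (z j m) with hSdef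
  set T : Fin n → Fin n → ℂ :=
    fun i j => ∑ m, (hA.sqrt.mulVec (z i)) m * star ((hA.sqrt.mulVec (z j)) m) with hTdef
  have h1A : (1 - A).PosSemidef := one_sub_psd A hA hnorm
  set C : Matrix (Fin d) (Fin d) ℂ := h1A.sqrt with hCdef
  -- T in dot-product form
  have hT : ∀ i j, T i j = star (z j) ⬝ᵥ A.mulVec (z i) := by
    intro i j
    simp only [hTdef]
    rw [sq_dot hA.sqrt hA.posSemidef_sqrt.1, hA.sqrt_mul_self]
  -- Gram form of S - T
  have hG : ∀ i j, ∑ m, (C.mulVec (z i)) m * star ((C.mulVec (z j)) m)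
      = S i j - T i j := by
    intro i j
    rw [sq_dot C h1A.posSemidef_sqrt.1, h1A.sqrt_mul_self, Matrix.sub_mulVec,
      dotProduct_sub, Matrix.one_mulVec, hT]
    congr 1
    simp only [dotProduct, hSdef, Pi.star_apply]
    exact Finset.sum_congr rfl fun m _ => mul_comm _ _
  -- norm of S < 1
  have hZ : ∀ i, ‖((WithLp.equiv 2 (Fin d → ℂ)).symm (z i) : EuclideanSpace ℂ (Fin d))‖ < 1 := by
    intro i
    rw [EuclideanSpace.norm_eq]
    calc Real.sqrt (∑ m, ‖z i m‖^2) < Real.sqrt 1 :=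
          Real.sqrt_lt_sqrt (Finset.sum_nonneg fun m _ => sq_nonneg _) (hz i)
      _ = 1 := Real.sqrt_one
  have hSnorm : ∀ i j, ‖S i j‖ < 1 := by
    intro i j
    have e : S i j = (inner ℂ ((WithLp.equiv 2 (Fin d → ℂ)).symm (z j) : EuclideanSpace ℂ (Fin d))
        ((WithLp.equiv 2 (Fin d → ℂ)).symm (z i)) : ℂ) := by
      rw [EuclideanSpace.inner_toLp_toLp]
      simp only [dotProduct, hSdef, Pi.star_apply]
      rfl
    rw [e]
    calc ‖(inner ℂ ((WithLp.equiv 2 (Fin d → ℂ)).symm (z j) : EuclideanSpace ℂ (Fin d))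
          ((WithLp.equiv 2 (Fin d → ℂ)).symm (z i)) : ℂ)‖
        ≤ ‖((WithLp.equiv 2 (Fin d → ℂ)).symm (z j) : EuclideanSpace ℂ (Fin d))‖ *
          ‖((WithLp.equiv 2 (Fin d → ℂ)).symm (z i) : EuclideanSpace ℂ (Fin d))‖ :=
          norm_inner_le_norm _ _
      _ < 1 := by nlinarith [hZ i, hZ j, norm_nonneg ((WithLp.equiv 2 (Fin d → ℂ)).symm (z j) : EuclideanSpace ℂ (Fin d)), norm_nonneg ((WithLp.equiv 2 (Fin d → ℂ)).symm (z i) : EuclideanSpace ℂ (Fin d))]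
  have hS1 : ∀ i j, (1 : ℂ) - S i j ≠ 0 := by
    intro i j h
    have h2 := hSnorm i j
    have h3 : S i j = 1 := by linear_combination -h
    rw [h3] at h2
    simp at h2
  -- pointwise kernel expansion
  have hkey : ∀ i j, (1 - T i j) / (1 - S i j)
      = 1 + (S i j - T i j) * (1 - S i j)⁻¹ := by
    intro i j
    field_simp [hS1 i j]
    ring
  -- split the goal
  have hsplit : ∑ i, ∑ j, c i * star (c j) * ((1 - T i j) / (1 - S i j))
      = (∑ i, ∑ j, c i * star (c j))
        + ∑ i, ∑ j, c i * star (c j) * ((S i j - T i j) * (1 - S i j)⁻¹) := by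
    rw [← Finset.sum_add_distrib]
    refine Finset.sum_congr rfl fun i _ => ?_
    rw [← Finset.sum_add_distrib]
    refine Finset.sum_congr rfl fun j _ => ?_
    rw [hkey i j]
    ring
  rw [hsplit]
  have part1 : (0:ℂ) ≤ ∑ i, ∑ j, c i * star (c j) := by
    have := gram_nonneg (fun _ : Fin n => fun _ : Unit => (1:ℂ)) c
    simpa using this
  refine add_nonneg part1 ?_
  -- the series part
  have hterm : ∀ k : ℕ, (0:ℂ) ≤ ∑ i, ∑ j, c i * star (c j) *
      ((S i j - T i j) * S i j ^ k) := by
    intro k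
    have hgram := gram_nonneg (ι := Fin d × (Fin k → Fin d))
      (fun i p => (C.mulVec (z i)) p.1 * ∏ t, z i (p.2 t)) c
    have heq : ∀ i j, (∑ p : Fin d × (Fin k → Fin d),
        ((C.mulVec (z i)) p.1 * ∏ t, z i (p.2 t)) *
        star ((C.mulVec (z j)) p.1 * ∏ t, z j (p.2 t)))
        = (S i j - T i j) * S i j ^ k := by
      intro i j
      rw [Fintype.sum_prod_type]
      have e1 : ∀ (m : Fin d) (f : Fin k → Fin d),
          ((C.mulVec (z i)) m * ∏ t, z i (f t)) *
          star ((C.mulVec (z j)) m * ∏ t, z j (f t))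
          = ((C.mulVec (z i)) m * star ((C.mulVec (z j)) m)) *
            ∏ t, (z i (f t) * star (z j (f t))) := by
        intro m f
        rw [star_mul', star_prod, Finset.prod_mul_distrib]
        ring
      simp_rw [e1]
      rw [← Finset.sum_mul_sum]
      rw [hG i j]
      congr 1
      -- ∑ f, ∏ t, z i (f t) * star (z j (f t)) = S i j ^ k
      rw [← Fintype.piFinset_univ,
        ← Finset.prod_univ_sum (fun _ : Fin k => (Finset.univ : Finset (Fin d)))
          (fun t m => z i m * star (z j m)),
        Finset.prod_const, Finset.card_univ, Fintype.card_fin]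
    calc (0:ℂ) ≤ ∑ i, ∑ j, c i * star (c j) * ∑ p : Fin d × (Fin k → Fin d),
          ((C.mulVec (z i)) p.1 * ∏ t, z i (p.2 t)) *
          star ((C.mulVec (z j)) p.1 * ∏ t, z j (p.2 t)) := hgram
      _ = _ := by
        refine Finset.sum_congr rfl fun i _ => Finset.sum_congr rfl fun j _ => ?_
        rw [heq i j]
  have hHasSum : HasSum (fun k : ℕ => ∑ i, ∑ j, c i * star (c j) *
      ((S i j - T i j) * S i j ^ k))
      (∑ i, ∑ j, c i * star (c j) * ((S i j - T i j) * (1 - S i j)⁻¹)) := by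
    refine hasSum_sum fun i _ => ?_
    refine hasSum_sum fun j _ => ?_
    exact ((hasSum_geometric_of_norm_lt_one (hSnorm i j)).mul_left
      (S i j - T i j)).mul_left (c i * star (c j))
  exact hasSum_le hterm hasSum_zero hHasSum
end

section
/- (Strengthened Schwarz lemma for the Schur class of the ball) Suppose g is holomorphic on the open unit ball B^d of C^d, the kernel (1 - g(z)\overline{g(w)})/(1 - ⟨z,w⟩) is positive semidefinite on B^d, g(0) = 0, and ∂g/∂z_1(0) = 1. Then g(z) = z_1 for all z ∈ B^d. -/
open scoped ComplexOrder
open Filter Topology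

set_option maxHeartbeats 1000000 in
private lemma alg_aux (a t s p q u v b c Z : ℂ) (ha : a ≠ 0) (h1 : 1 - a*a ≠ 0)
    (h2 : 1 - a*v ≠ 0) (h3 : 1 - u*a ≠ 0) (h4 : 1 - Z ≠ 0) :
    ((-a⁻¹)*(-a⁻¹)*((1 - 0*0)/(1-0)) + (-a⁻¹)*(a⁻¹)*((1 - 0*q)/(1 - 0))
    + (-a⁻¹)*s*((1 - 0*c)/(1-0)))
    + ((a⁻¹)*(-a⁻¹)*((1 - p*0)/(1-0)) + (a⁻¹)*(a⁻¹)*((1 - p*q)/(1 - a*a))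
    + (a⁻¹)*s*((1 - p*c)/(1 - a*v)))
    + (t*(-a⁻¹)*((1 - b*0)/(1-0)) + t*(a⁻¹)*((1 - b*q)/(1 - u*a))
    + t*s*((1 - b*c)/(1-Z)))
    = (1 - (p/a)*(q/a))/(1 - a^2) + s*((v - (p/a)*c)/(1 - a*v))
      + t*((u - b*(q/a))/(1 - u*a)) + t*s*((1 - b*c)/(1-Z)) := by
  have h1' : 1 - a^2 ≠ 0 := by rwa [sq]
  have T1 : (a⁻¹*a⁻¹)*((1-p*q)/(1-a*a)) - a⁻¹*a⁻¹ = (1 - (p/a)*(q/a))/(1-a^2) := by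
    field_simp
    ring
  have T2 : a⁻¹*s*((1-p*c)/(1-a*v)) - a⁻¹*s = s*((v - (p/a)*c)/(1-a*v)) := by
    field_simp
    ring
  have T3 : t*a⁻¹*((1-b*q)/(1-u*a)) - t*a⁻¹ = t*((u - b*(q/a))/(1-u*a)) := by
    rw [mul_comm u a] at h3 ⊢
    field_simp
    ring
  simp only [mul_zero, zero_mul, sub_zero, div_one, mul_one]
  linear_combination T1 + T2 + T3

set_option maxHeartbeats 1000000 in
/-- strengthened Schwarz lemma for the Schur class of the ball:
If `g` is holomorphic on the open unit ball `B^d ⊂ ℂ^d`, the kernel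
`(1 - g(z) conj (g w))/(1 - ⟨z,w⟩)` is positive semidefinite on `B^d`,
`g 0 = 0` and `∂g/∂z₁ (0) = 1`, then `g z = z₁` on `B^d`. -/
theorem schur_class_schwarz_lemma
    (d : ℕ) [NeZero d] (g : (Fin d → ℂ) → ℂ)
    (hg : DifferentiableOn ℂ g {z : Fin d → ℂ | ∑ m, ‖z m‖ ^ 2 < 1})
    (hker : ∀ (n : ℕ) (z : Fin n → Fin d → ℂ), (∀ i, ∑ m, ‖z i m‖ ^ 2 < 1) →
      ∀ c : Fin n → ℂ,
        0 ≤ ∑ i, ∑ j, c i * star (c j) *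
          ((1 - g (z i) * star (g (z j))) / (1 - ∑ m, z i m * star (z j m))))
    (h0 : g 0 = 0)
    (hderiv : deriv (fun w : ℂ => g (fun m => if m = 0 then w else 0)) 0 = 1) :
    ∀ z : Fin d → ℂ, (∑ m, ‖z m‖ ^ 2 < 1) → g z = z 0 := by
  set h : ℂ → ℂ := fun w => g (fun m => if m = 0 then w else 0) with hh
  have h0' : h 0 = 0 := by
    have : (fun m : Fin d => if m = 0 then (0:ℂ) else 0) = 0 := by
      funext m; simp
    simp only [hh, this, h0]
  have hdiff : DifferentiableAt ℂ h 0 := by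
    by_contra hcon
    rw [deriv_zero_of_not_differentiableAt hcon] at hderiv
    exact one_ne_zero hderiv.symm
  have hd : HasDerivAt h 1 0 := by
    have := hdiff.hasDerivAt
    rwa [hderiv] at this
  have hslope : Tendsto (fun w : ℂ => h w / w) (𝓝[≠] 0) (𝓝 1) := by
    have := hasDerivAt_iff_tendsto_slope.mp hd
    have heq : slope h 0 = fun w : ℂ => h w / w := by
      funext w
      simp [slope_def_field, h0']
    rwa [heq] at this
  have hcoe : Tendsto (fun ε : ℝ => (ε:ℂ)) (𝓝[>] (0:ℝ)) (𝓝[≠] (0:ℂ)) := by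
    refine tendsto_nhdsWithin_of_tendsto_nhds_of_eventually_within _ ?_ ?_
    · simpa using (Complex.continuous_ofReal.tendsto 0).mono_left nhdsWithin_le_nhds
    · filter_upwards [self_mem_nhdsWithin] with ε hε
      have : (0:ℝ) < ε := hε
      simp [Complex.ofReal_ne_zero, ne_of_gt this]
  have hq : Tendsto (fun ε : ℝ => h ε / ε) (𝓝[>] (0:ℝ)) (𝓝 1) := hslope.comp hcoe
  have hq2 : Tendsto (fun ε : ℝ => star (h ε) / (ε:ℂ)) (𝓝[>] (0:ℝ)) (𝓝 1) := by
    have h1 : Tendsto (fun ε : ℝ => star (h ε / (ε:ℂ))) (𝓝[>] (0:ℝ)) (𝓝 1) := by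
      have := (continuous_star.tendsto (1:ℂ)).comp hq
      rw [star_one] at this
      exact this
    refine h1.congr fun ε => ?_
    rw [star_div₀]
    congr 1
    simp [Complex.star_def, Complex.conj_ofReal]
  intro z hz
  set w : ℂ := z 0 - g z with hw
  set Z : ℂ := ∑ m, z m * star (z m) with hZdef
  have hZ : Z = ((∑ m, ‖z m‖ ^ 2 : ℝ) : ℂ) := by
    rw [hZdef]
    push_cast
    congr 1
    funext m
    rw [Complex.star_def, Complex.mul_conj]
    norm_cast
    rw [Complex.normSq_eq_norm_sq]
  have hZ1 : (1:ℂ) - Z ≠ 0 := by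
    have hne : ((1 - ∑ m, ‖z m‖ ^ 2 : ℝ) : ℂ) ≠ 0 :=
      Complex.ofReal_ne_zero.mpr (by linarith)
    rw [hZ]
    push_cast at hne ⊢
    exact hne
  set K : ℂ := (1 - g z * star (g z)) / (1 - Z) with hK
  have hz0 : ‖z 0‖ < 1 := by
    have h1 : ‖z 0‖ ^ 2 ≤ ∑ m, ‖z m‖ ^ 2 := by
      apply Finset.single_le_sum (f := fun m => ‖z m‖ ^ 2)
      · intro i _; positivity
      · exact Finset.mem_univ 0
    nlinarith [norm_nonneg (z 0)]
  -- key inequality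
  have key : ∀ t : ℂ, 0 ≤ (star t * (star (z 0) - star (g z)) + t * (z 0 - g z)
      + t * star t * K).re := by
    intro t
    set G : ℝ → ℂ := fun ε =>
      (1 - (h ε / ε) * (star (h ε) / ε)) / (1 - (ε:ℂ)^2)
      + star t * ((star (z 0) - (h ε / ε) * star (g z)) / (1 - (ε:ℂ) * star (z 0)))
      + t * ((z 0 - g z * (star (h ε) / ε)) / (1 - z 0 * (ε:ℂ)))
      + t * star t * ((1 - g z * star (g z)) / (1 - Z)) with hG
    -- positivity of G on (0, 1/2)
    have hGpos : ∀ ε ∈ Set.Ioo (0:ℝ) (1/2), 0 ≤ (G ε).re := by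
      intro ε hε
      obtain ⟨hε0, hε2⟩ := hε
      have hεc : (ε:ℂ) ≠ 0 := Complex.ofReal_ne_zero.mpr (ne_of_gt hε0)
      set e : Fin d → ℂ := fun m => if m = 0 then (ε:ℂ) else 0 with he
      have hball : ∀ i, ∑ m, ‖(![0, e, z] : Fin 3 → Fin d → ℂ) i m‖ ^ 2 < 1 := by
        intro i
        fin_cases i
        · simpa using one_pos
        · have heval : ∀ m : Fin d, ‖e m‖ ^ 2 = if m = 0 then ε ^ 2 else 0 := by
            intro m
            by_cases hm : m = 0 <;> simp [he, hm, abs_of_pos hε0, sq_abs]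
          show (∑ m, ‖e m‖ ^ 2) < 1
          rw [Finset.sum_congr rfl (fun m _ => heval m),
            Finset.sum_ite_eq' Finset.univ (0 : Fin d)]
          simp only [Finset.mem_univ, if_true]
          nlinarith
        · simpa using hz
      have hpos := hker 3 ![0, e, z] hball ![-(ε:ℂ)⁻¹, (ε:ℂ)⁻¹, t]
      have s0l : ∀ x : Fin d → ℂ, ∑ m, (0 : Fin d → ℂ) m * star (x m) = 0 := by
        intro x; simp
      have s0r : ∀ x : Fin d → ℂ, ∑ m, x m * star ((0 : Fin d → ℂ) m) = 0 := by
        intro x; simp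
      have sel : ∀ x : Fin d → ℂ, ∑ m, e m * star (x m) = (ε:ℂ) * star (x 0) := by
        intro x
        simp only [he, ite_mul, zero_mul]
        rw [Finset.sum_ite_eq' Finset.univ (0 : Fin d)]
        simp
      have ser : ∀ x : Fin d → ℂ, ∑ m, x m * star (e m) = x 0 * (ε:ℂ) := by
        intro x
        simp only [he, apply_ite star, star_zero, mul_ite, mul_zero]
        rw [Finset.sum_ite_eq' Finset.univ (0 : Fin d)]
        simp [Complex.star_def, Complex.conj_ofReal]
      have sse : ∑ m, e m * star (e m) = (ε:ℂ) * (ε:ℂ) := by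
        rw [sel e]
        congr 1
        simp [he, Complex.star_def, Complex.conj_ofReal]
      have sez : ∑ m, e m * star (z m) = (ε:ℂ) * star (z 0) := sel z
      have sze : ∑ m, z m * star (e m) = z 0 * (ε:ℂ) := ser z
      have hge : g e = h ε := rfl
      have hd1 : (1:ℂ) - (ε:ℂ) * (ε:ℂ) ≠ 0 := by
        have : ((1 - ε * ε : ℝ) : ℂ) ≠ 0 := by
          rw [Complex.ofReal_ne_zero]; nlinarith
        push_cast at this
        exact this
      have hd2 : (1:ℂ) - (ε:ℂ) * star (z 0) ≠ 0 := by
        rw [sub_ne_zero]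
        intro hcon
        have hnorm : ‖(1:ℂ)‖ = ‖(ε:ℂ) * star (z 0)‖ := by rw [hcon]
        rw [norm_one, norm_mul, norm_star, Complex.norm_real, Real.norm_eq_abs] at hnorm
        have h1 : |ε| * ‖z 0‖ < 1 := by
          rw [abs_of_pos hε0]
          nlinarith [norm_nonneg (z 0)]
        linarith [hnorm, h1]
      have hd3 : (1:ℂ) - z 0 * (ε:ℂ) ≠ 0 := by
        rw [sub_ne_zero]
        intro hcon
        have hnorm : ‖(1:ℂ)‖ = ‖z 0 * (ε:ℂ)‖ := by rw [hcon]
        rw [norm_one, norm_mul, Complex.norm_real, Real.norm_eq_abs] at hnorm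
        have h1 : ‖z 0‖ * |ε| < 1 := by
          rw [abs_of_pos hε0]
          nlinarith [norm_nonneg (z 0)]
        linarith [hnorm, h1]
      have hsum : (∑ i, ∑ j, (![-(ε:ℂ)⁻¹, (ε:ℂ)⁻¹, t] : Fin 3 → ℂ) i
            * star ((![-(ε:ℂ)⁻¹, (ε:ℂ)⁻¹, t] : Fin 3 → ℂ) j) *
          ((1 - g ((![0, e, z] : Fin 3 → Fin d → ℂ) i)
              * star (g ((![0, e, z] : Fin 3 → Fin d → ℂ) j))) /
            (1 - ∑ m, (![0, e, z] : Fin 3 → Fin d → ℂ) i m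
              * star ((![0, e, z] : Fin 3 → Fin d → ℂ) j m)))) = G ε := by
        have hstar_eps : star ((ε:ℂ)) = (ε:ℂ) := by
          simp [Complex.star_def, Complex.conj_ofReal]
        have hstar_inv : star ((ε:ℂ)⁻¹) = (ε:ℂ)⁻¹ := by
          rw [star_inv₀, hstar_eps]
        simp only [Fin.sum_univ_three, Matrix.cons_val_zero, Matrix.cons_val_one,
          Matrix.head_cons, Matrix.cons_val_two, Matrix.tail_cons,
          sse, sez, sze, s0l, s0r, hge, h0, star_zero, star_neg, hstar_inv]
        exact alg_aux (ε:ℂ) t (star t) (h ε) (star (h ε)) (z 0) (star (z 0))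
          (g z) (star (g z)) Z hεc hd1 hd2 hd3 hZ1
      rw [hsum] at hpos
      exact (Complex.le_def.mp hpos).1
    -- limit of G
    have hT : Tendsto (fun ε : ℝ => (G ε).re) (𝓝[>] (0:ℝ))
        (𝓝 ((star t * (star (z 0) - star (g z)) + t * (z 0 - g z) + t * star t * K).re)) := by
      have h1 : Tendsto (fun ε:ℝ => ((ε:ℝ):ℂ)) (𝓝[>] (0:ℝ)) (𝓝 0) := by
        simpa using ((Complex.continuous_ofReal.tendsto 0).mono_left nhdsWithin_le_nhds)
      have A : Tendsto (fun ε:ℝ => (1 - (h ε / ε) * (star (h ε) / (ε:ℂ))) / (1 - (ε:ℂ)^2))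
          (𝓝[>] (0:ℝ)) (𝓝 0) := by
        have := ((tendsto_const_nhds (x := (1:ℂ))).sub (hq.mul hq2)).div
          ((tendsto_const_nhds (x := (1:ℂ))).sub (h1.pow 2))
          (show (1:ℂ) - 0^2 ≠ 0 by norm_num)
        rw [show ((1:ℂ) - 1*1)/(1-0^2) = 0 by norm_num] at this
        exact this
      have B : Tendsto (fun ε:ℝ => star t * ((star (z 0) - (h ε / ε) * star (g z))
            / (1 - (ε:ℂ) * star (z 0)))) (𝓝[>] (0:ℝ))
          (𝓝 (star t * (star (z 0) - star (g z)))) := by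
        have := (tendsto_const_nhds (x := star t)).mul
          (((tendsto_const_nhds (x := star (z 0))).sub
              (hq.mul (tendsto_const_nhds (x := star (g z))))).div
            ((tendsto_const_nhds (x := (1:ℂ))).sub
              (h1.mul (tendsto_const_nhds (x := star (z 0)))))
            (show (1:ℂ) - 0 * star (z 0) ≠ 0 by simp))
        simpa using this
      have C : Tendsto (fun ε:ℝ => t * ((z 0 - g z * (star (h ε) / (ε:ℂ)))
            / (1 - z 0 * (ε:ℂ)))) (𝓝[>] (0:ℝ)) (𝓝 (t * (z 0 - g z))) := by
        have := (tendsto_const_nhds (x := t)).mul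
          (((tendsto_const_nhds (x := z 0)).sub
              ((tendsto_const_nhds (x := g z)).mul hq2)).div
            ((tendsto_const_nhds (x := (1:ℂ))).sub
              ((tendsto_const_nhds (x := z 0)).mul h1))
            (show (1:ℂ) - z 0 * 0 ≠ 0 by simp))
        simpa using this
      have D : Tendsto G (𝓝[>] (0:ℝ))
          (𝓝 (star t * (star (z 0) - star (g z)) + t * (z 0 - g z) + t * star t * K)) := by
        have := ((A.add B).add C).add (tendsto_const_nhds (x := t * star t * K))
        rw [hG]
        simpa [hK, add_assoc] using this
      exact (Complex.continuous_re.tendsto _).comp D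
    refine ge_of_tendsto hT ?_
    filter_upwards [Ioo_mem_nhdsGT_of_mem (by norm_num : (0:ℝ) ∈ Set.Ico (0:ℝ) (1/2))]
      with ε hε
    exact hGpos ε hε
  -- conclusion
  set N : ℝ := Complex.normSq w with hN
  have hNeq : N = 0 := by
    by_contra hNne
    have hNpos : 0 < N := lt_of_le_of_ne (Complex.normSq_nonneg w) (Ne.symm hNne)
    set s : ℝ := 1 / (|K.re| + 1) with hs
    have hspos : 0 < s := by positivity
    have hsK : s * |K.re| < 1 := by
      rw [hs, div_mul_eq_mul_div, one_mul, div_lt_one (by positivity)]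
      linarith
    have hkey := key (-(s:ℂ) * star w)
    have h3 : w * star w = ((N:ℝ) : ℂ) := by
      rw [hN, Complex.star_def, Complex.mul_conj]
    have hcomp : star (-(s:ℂ) * star w) * (star (z 0) - star (g z))
        + (-(s:ℂ) * star w) * (z 0 - g z)
        + (-(s:ℂ) * star w) * star (-(s:ℂ) * star w) * K
        = ((-2 * s * N : ℝ) : ℂ) + ((s^2 * N : ℝ):ℂ) * K := by
      have h1 : star (z 0) - star (g z) = star w := by
        rw [hw, star_sub]
      have h2 : star (-(s:ℂ) * star w) = -(s:ℂ) * w := by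
        simp [Complex.star_def, map_mul, map_neg, Complex.conj_conj, Complex.conj_ofReal]
      rw [h1, h2, ← hw]
      push_cast
      linear_combination ((s:ℂ)^2 * K - 2*(s:ℂ)) * h3
    rw [hcomp] at hkey
    have hre : (((-2 * s * N : ℝ) : ℂ) + ((s^2 * N : ℝ):ℂ) * K).re
        = -2 * s * N + s^2 * N * K.re := by
      simp [Complex.add_re, Complex.ofReal_re, Complex.mul_re, Complex.ofReal_im,
        ← Complex.ofReal_pow]
    rw [hre] at hkey
    have hfac1 : s^2 * N * K.re ≤ s^2 * N * |K.re| :=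
      mul_le_mul_of_nonneg_left (le_abs_self K.re) (by positivity)
    have hfac2 : (s * N) * (s * |K.re|) < (s * N) * 1 :=
      mul_lt_mul_of_pos_left hsK (mul_pos hspos hNpos)
    nlinarith [hkey, hfac1, hfac2, mul_pos hspos hNpos]
  have hw0 : w = 0 := by
    rw [← Complex.normSq_eq_zero, ← hN]
    exact hNeq
  rw [hw, sub_eq_zero] at hw0
  exact hw0.symm
end

section
/- For each ζ ∈ ∂B^d, the function h_ζ(z) = (1+⟨z,ζ⟩)/(1-⟨z,ζ⟩) is an extreme point of the normalized positive Schur class S^+_0: if f, g ∈ S^+_0 and t ∈ (0,1) satisfy h_ζ = t f + (1-t) g, then f = g = h_ζ. -/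
open scoped ComplexOrder

/-- The positive-Schur-class kernel condition for a function `f` on the open
unit ball of `ℂ^d`: `(f z + conj (f w))/(1 - ⟨z,w⟩)` is a positive
semidefinite kernel. -/
def PosSchurKernel (d : ℕ) (f : (Fin d → ℂ) → ℂ) : Prop :=
  ∀ (n : ℕ) (z : Fin n → Fin d → ℂ), (∀ i, ∑ m, ‖z i m‖ ^ 2 < 1) →
    ∀ c : Fin n → ℂ,
      0 ≤ ∑ i, ∑ j, c i * star (c j) *
        ((f (z i) + star (f (z j))) / (1 - ∑ m, z i m * star (z j m)))

lemma sum_mul_star {d : ℕ} (v : Fin d → ℂ) :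
    ∑ m, v m * star (v m) = ((∑ m, ‖v m‖^2 : ℝ) : ℂ) := by
  push_cast
  refine Finset.sum_congr rfl fun m _ => ?_
  rw [Complex.star_def, Complex.mul_conj]
  norm_cast
  rw [Complex.sq_norm]

lemma half_norm {d : ℕ} (ζ : Fin d → ℂ) (hζ : ∑ m, ‖ζ m‖ ^ 2 = 1) :
    ∑ m, ‖ζ m / 2‖^2 = 4⁻¹ := by
  have : ∀ m : Fin d, ‖ζ m / 2‖^2 = ‖ζ m‖^2 / 4 := fun m => by
    rw [norm_div]; norm_num; ring
  rw [Finset.sum_congr rfl fun m _ => this m, ← Finset.sum_div, hζ]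
  norm_num

lemma zeta_self {d : ℕ} (ζ : Fin d → ℂ) (hζ : ∑ m, ‖ζ m‖ ^ 2 = 1) :
    ∑ m, ζ m * star (ζ m) = (1:ℂ) := by
  rw [sum_mul_star ζ, hζ, Complex.ofReal_one]

lemma quad_limit (D : ℝ) (hD : 0 ≤ D) (A : ℂ)
    (h : ∀ s : ℂ, 0 ≤ D * Complex.normSq s + 2 * (s * A).re) : A = 0 := by
  by_contra hA
  have hA2 : 0 < Complex.normSq A := Complex.normSq_pos.mpr hA
  have hD1 : (0:ℝ) < D + 1 := by linarith
  have hs := h (-(((D + 1)⁻¹ : ℝ) : ℂ) * star A)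
  have e1 : Complex.normSq (-(((D + 1)⁻¹ : ℝ) : ℂ) * star A)
      = (D+1)⁻¹^2 * Complex.normSq A := by
    simp only [Complex.star_def, Complex.normSq_mul, Complex.normSq_neg,
      Complex.normSq_conj, Complex.normSq_ofReal]
    ring
  have e2 : ((-(((D + 1)⁻¹ : ℝ) : ℂ) * star A) * A).re
      = -((D+1)⁻¹ * Complex.normSq A) := by
    rw [mul_assoc, Complex.star_def, ← Complex.normSq_eq_conj_mul_self,
      neg_mul, ← Complex.ofReal_mul, ← Complex.ofReal_neg, Complex.ofReal_re]
  rw [e1, e2] at hs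
  have hu : (0:ℝ) < (D+1)⁻¹ := inv_pos.mpr hD1
  have hDu : D * (D+1)⁻¹ ≤ 1 := by
    rw [← div_eq_mul_inv]
    exact (div_le_one hD1).mpr (by linarith)
  nlinarith [mul_pos hu hA2, mul_le_mul_of_nonneg_right hDu (mul_pos hu hA2).le]

set_option maxHeartbeats 2000000 in
lemma fullball {d : ℕ} (ζ : Fin d → ℂ) (hζ : ∑ m, ‖ζ m‖ ^ 2 = 1)
    (f : (Fin d → ℂ) → ℂ) (hfk : PosSchurKernel d f) (hf0 : f 0 = 1)
    (hfh : f (fun m => ζ m / 2) = 3)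
    (z : Fin d → ℂ) (hz : ∑ m, ‖z m‖ ^ 2 < 1) :
    f z = (1 + ∑ m, z m * star (ζ m)) / (1 - ∑ m, z m * star (ζ m)) := by
  set w := ∑ m, z m * star (ζ m) with hw
  set S := ∑ m, ‖z m‖ ^ 2 with hS
  -- |w| < 1
  have habs : ‖w‖ < 1 := by
    have h1 : ‖w‖ ≤ ∑ m, ‖z m‖ * ‖ζ m‖ := by
      rw [hw]
      refine (norm_sum_le _ _).trans (le_of_eq ?_)
      refine Finset.sum_congr rfl fun m _ => ?_
      rw [norm_mul, norm_star]
    have h2 : (∑ m, ‖z m‖ * ‖ζ m‖)^2 ≤ S * 1 := by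
      rw [hS, ← hζ]
      exact Finset.sum_mul_sq_le_sq_mul_sq Finset.univ _ _
    have h3 : (0:ℝ) ≤ ∑ m, ‖z m‖ * ‖ζ m‖ :=
      Finset.sum_nonneg fun m _ => mul_nonneg (norm_nonneg _) (norm_nonneg _)
    nlinarith [norm_nonneg w]
  have habs' : ‖star w‖ < 1 := by
    rwa [norm_star]
  have hne : ∀ u v : ℂ, ‖v‖ < 1 → 1 ≤ ‖u‖ → u - v ≠ 0 := by
    intro u v hv hu h0
    have : v = u := by linear_combination -h0
    rw [this] at hv; linarith
  have h1w : (1:ℂ) - w ≠ 0 := hne 1 w habs (by norm_num)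
  have h2w : (2:ℂ) - w ≠ 0 := hne 2 w habs (by simp)
  have h2ws : (2:ℂ) - star w ≠ 0 := hne 2 (star w) habs' (by simp)
  have h1wh : (1:ℂ) - w / 2 ≠ 0 := fun h0 => h2w (by linear_combination 2 * h0)
  have h1wsh : (1:ℂ) - star w / 2 ≠ 0 := fun h0 => h2ws (by linear_combination 2 * h0)
  have hS1 : (1:ℂ) - (S:ℝ) ≠ 0 := by
    intro h0
    have : ((1 - S : ℝ):ℂ) = 0 := by push_cast; linear_combination h0
    rw [Complex.ofReal_eq_zero] at this
    linarith
  -- D ≥ 0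
  have hz1 : ∀ i : Fin 1, ∑ m, ‖(![z] : Fin 1 → Fin d → ℂ) i m‖ ^ 2 < 1 := by
    intro i; fin_cases i; simpa using hz
  have hDpos := hfk 1 ![z] hz1 ![1]
  simp only [Fin.sum_univ_one, Matrix.cons_val_zero, one_mul, star_one, mul_one,
    Matrix.cons_val_fin_one] at hDpos
  rw [sum_mul_star z, ← hS] at hDpos
  set D := (2 * (f z).re) / (1 - S) with hD
  have hDeq : ((D:ℝ):ℂ) = (f z + star (f z)) / (1 - ((S:ℝ):ℂ)) := by
    rw [hD, Complex.star_def, Complex.add_conj]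
    push_cast
    ring
  have hD0 : 0 ≤ D := by
    rw [← hDeq] at hDpos
    exact Complex.zero_le_real.mp hDpos
  -- the coefficient A
  set A := (f z + 1) - (f z + 3) / (2 - w) with hA
  -- inner-product sums
  have hQhalf : ∑ m, ζ m / 2 * (star (ζ m) / 2) = (4⁻¹ : ℂ) := by
    calc ∑ m, ζ m / 2 * (star (ζ m) / 2) = (∑ m, ζ m * star (ζ m))/4 := by
          rw [Finset.sum_div]; exact Finset.sum_congr rfl fun m _ => by ring
    _ = 4⁻¹ := by rw [zeta_self ζ hζ]; norm_num
  have hzh : ∑ m, z m * (star (ζ m) / 2) = w / 2 := by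
    rw [hw, Finset.sum_div]
    exact Finset.sum_congr rfl fun m _ => by ring
  have hhz : ∑ m, ζ m / 2 * star (z m) = star w / 2 := by
    rw [hw, star_sum, Finset.sum_div]
    refine Finset.sum_congr rfl fun m _ => ?_
    simp only [star_mul', star_star]
    ring
  have hP3 : ∀ i : Fin 3,
      ∑ m, ‖(![0, fun m => ζ m / 2, z] : Fin 3 → Fin d → ℂ) i m‖ ^ 2 < 1 := by
    intro i
    fin_cases i
    · simp
    · simp only [Fin.mk_one, Matrix.cons_val_one, Matrix.head_cons, Matrix.cons_val_zero]
      rw [half_norm ζ hζ]; norm_num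
    · simpa using hz
  have hquad : ∀ s : ℂ, 0 ≤ D * Complex.normSq s + 2 * ((s * A).re) := by
    intro s
    have h := hfk 3 ![0, fun m => ζ m / 2, z] hP3 ![1, -(1/2 : ℂ), s]
    simp only [Fin.sum_univ_three, Matrix.cons_val_zero, Matrix.cons_val_one,
      Matrix.head_cons, Matrix.cons_val_two, Matrix.tail_cons, Pi.zero_apply,
      zero_mul, mul_zero, star_zero, Finset.sum_const_zero, sub_zero, div_one,
      hf0, hfh, star_one, one_mul, mul_one, star_div₀, star_ofNat, star_neg,
      star_one] at h
    rw [hQhalf, hzh, hhz, sum_mul_star z, ← hS] at h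
    refine Complex.zero_le_real.mp (le_of_le_of_eq h ?_)
    have b1 : ((Complex.normSq s : ℝ):ℂ) = s * star s := by
      rw [Complex.star_def, Complex.mul_conj]
    have b2 : ((2 * ((s*A).re) : ℝ):ℂ) = s * A + star s * star A := by
      rw [← star_mul', Complex.star_def, Complex.add_conj]
    rw [Complex.ofReal_add, Complex.ofReal_mul, b1, b2, hDeq, hA]
    simp only [star_sub, star_add, star_div₀, star_ofNat, star_one]
    simp only [Complex.star_def] at h1wh h1wsh h2w h2ws ⊢
    field_simp [h1wh, h1wsh, h2w, h2ws, hS1]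
    ring
  have hA0 : A = 0 := quad_limit D hD0 A hquad
  rw [hA] at hA0
  have hlin : f z * (1 - w) = 1 + w := by
    field_simp [h2w] at hA0
    linear_combination hA0
  rw [eq_div_iff h1w]
  linear_combination hlin

lemma halfpoint {d : ℕ} (ζ : Fin d → ℂ) (hζ : ∑ m, ‖ζ m‖ ^ 2 = 1)
    (f : (Fin d → ℂ) → ℂ) (hfk : PosSchurKernel d f) (hf0 : f 0 = 1) :
    (f (fun m => ζ m / 2)).re ≤ 3 ∧
      ((f (fun m => ζ m / 2)).re = 3 → f (fun m => ζ m / 2) = 3) := by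
  set F := f (fun m => ζ m / 2) with hF
  have hQ : ∑ m, ζ m / 2 * (star (ζ m) / 2) = (4⁻¹ : ℂ) := by
    calc ∑ m, ζ m / 2 * (star (ζ m) / 2) = (∑ m, ζ m * star (ζ m))/4 := by
          rw [Finset.sum_div]; exact Finset.sum_congr rfl fun m _ => by ring
    _ = 4⁻¹ := by rw [zeta_self ζ hζ]; norm_num
  have hP : ∀ i : Fin 2, ∑ m, ‖(![0, fun m => ζ m / 2] : Fin 2 → Fin d → ℂ) i m‖ ^ 2 < 1 := by
    intro i
    fin_cases i
    · simp
    · simp only [Fin.mk_one, Matrix.cons_val_one, Matrix.head_cons, Matrix.cons_val_zero]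
      rw [half_norm ζ hζ]; norm_num
  have h := hfk 2 ![0, fun m => ζ m / 2] hP ![-(F+1)/2, 1]
  simp only [Fin.sum_univ_two, Matrix.cons_val_zero, Matrix.cons_val_one,
    Matrix.head_cons, Pi.zero_apply, zero_mul, mul_zero, star_zero,
    Finset.sum_const_zero, sub_zero, div_one, hf0, star_one, ← hF,
    star_div₀, star_neg, star_add, star_ofNat] at h
  rw [hQ] at h
  have key : 0 ≤ (8/3) * F.re - Complex.normSq (F + 1) / 2 := by
    refine Complex.zero_le_real.mp (le_of_le_of_eq h ?_)
    have e1 : F + star F = ((2 * F.re : ℝ) : ℂ) := by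
      rw [Complex.star_def, Complex.add_conj]
    have e2 : (F + 1) * star (F + 1) = ((Complex.normSq (F+1) : ℝ) : ℂ) := by
      rw [Complex.star_def, Complex.mul_conj]
    simp only [star_add, star_one] at e2
    push_cast at e1 e2 ⊢
    linear_combination (4/3 : ℂ) * e1 - e2 / 2
  have hnsq : Complex.normSq (F+1) = (F.re+1)^2 + F.im^2 := by
    simp [Complex.normSq_apply]; ring
  rw [hnsq] at key
  constructor
  · nlinarith [sq_nonneg F.im, sq_nonneg (F.re - 3), sq_nonneg (F.re - 1/3)]
  · intro hx
    have hy : F.im = 0 := by nlinarith [sq_nonneg F.im]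
    apply Complex.ext <;> simp [hx, hy]


/-- For `ζ ∈ ∂B^d`, the function
`h_ζ(z) = (1 + ⟨z,ζ⟩)/(1 - ⟨z,ζ⟩)` is an extreme point of the normalized
positive Schur class `S⁺₀ = {f ∈ S⁺ : f(0) = 1}`: if `f, g ∈ S⁺₀`,
`t ∈ (0,1)` and `h_ζ = t f + (1-t) g` on the ball, then `f = g = h_ζ`. -/
theorem herglotz_function_extreme_in_positive_schur_class
    (d : ℕ) (ζ : Fin d → ℂ) (hζ : ∑ m, ‖ζ m‖ ^ 2 = 1)
    (f g : (Fin d → ℂ) → ℂ)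
    (hf : DifferentiableOn ℂ f {z : Fin d → ℂ | ∑ m, ‖z m‖ ^ 2 < 1})
    (hg : DifferentiableOn ℂ g {z : Fin d → ℂ | ∑ m, ‖z m‖ ^ 2 < 1})
    (hfk : PosSchurKernel d f) (hgk : PosSchurKernel d g)
    (hf0 : f 0 = 1) (hg0 : g 0 = 1)
    (t : ℝ) (ht : t ∈ Set.Ioo (0 : ℝ) 1)
    (hconv : ∀ z : Fin d → ℂ, (∑ m, ‖z m‖ ^ 2 < 1) →
      (1 + ∑ m, z m * star (ζ m)) / (1 - ∑ m, z m * star (ζ m)) =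
        (t : ℂ) * f z + (1 - (t : ℂ)) * g z) :
    ∀ z : Fin d → ℂ, (∑ m, ‖z m‖ ^ 2 < 1) →
      f z = (1 + ∑ m, z m * star (ζ m)) / (1 - ∑ m, z m * star (ζ m)) ∧
      g z = (1 + ∑ m, z m * star (ζ m)) / (1 - ∑ m, z m * star (ζ m)) := by
  obtain ⟨ht0, ht1⟩ := ht
  set F := f (fun m => ζ m / 2) with hF
  set G := g (fun m => ζ m / 2) with hG
  obtain ⟨hFle, hFeq⟩ := halfpoint ζ hζ f hfk hf0
  obtain ⟨hGle, hGeq⟩ := halfpoint ζ hζ g hgk hg0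
  have hball : ∑ m, ‖ζ m / 2‖ ^ 2 < 1 := by rw [half_norm ζ hζ]; norm_num
  have hhalfζ : ∑ m, ζ m / 2 * star (ζ m) = (2⁻¹ : ℂ) := by
    calc ∑ m, ζ m / 2 * star (ζ m) = (∑ m, ζ m * star (ζ m)) / 2 := by
          rw [Finset.sum_div]; exact Finset.sum_congr rfl fun m _ => by ring
    _ = 2⁻¹ := by rw [zeta_self ζ hζ]; norm_num
  have hc := hconv (fun m => ζ m / 2) hball
  simp only [hhalfζ, ← hF, ← hG] at hc
  norm_num at hc
  -- hc : 3 = ↑t * F + (1 - ↑t) * G  (hopefully)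
  have hre := congrArg Complex.re hc
  simp only [Complex.add_re, Complex.mul_re, Complex.sub_re, Complex.sub_im,
    Complex.ofReal_re, Complex.ofReal_im, Complex.one_re, Complex.one_im,
    Complex.re_ofNat, zero_mul, mul_zero, sub_zero, zero_sub, neg_zero,
    sub_self] at hre
  have h1 : 0 ≤ t * (3 - F.re) := mul_nonneg ht0.le (by linarith)
  have h2 : 0 ≤ (1 - t) * (3 - G.re) := mul_nonneg (by linarith) (by linarith)
  have hsum0 : t * (3 - F.re) + (1 - t) * (3 - G.re) = 0 := by nlinarith [hre]
  have hFre : F.re = 3 := by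
    have ht' : t * (3 - F.re) = 0 := by linarith
    rcases mul_eq_zero.mp ht' with h | h
    · exact absurd h (ne_of_gt ht0)
    · linarith
  have hGre : G.re = 3 := by
    have ht' : (1 - t) * (3 - G.re) = 0 := by linarith
    rcases mul_eq_zero.mp ht' with h | h
    · exact absurd h (ne_of_gt (by linarith))
    · linarith
  have hf3 : f (fun m => ζ m / 2) = 3 := hFeq hFre
  have hg3 : g (fun m => ζ m / 2) = 3 := hGeq hGre
  intro z hz
  exact ⟨fullball ζ hζ f hfk hf0 hf3 z hz, fullball ζ hζ g hgk hg0 hg3 z hz⟩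
end

section
/- Every function in the class M^+ belongs to the positive Schur class S^+: if f(z) = ∫_{∂B^d} (1+⟨z,ζ⟩)/(1-⟨z,ζ⟩) dμ(ζ) + it for a finite positive Borel measure μ on the sphere and t ∈ R, then the kernel (f(z)+\overline{f(w)})/(1-⟨z,w⟩) is positive semidefinite on B^d. -/
open MeasureTheory
open scoped ComplexOrder

noncomputable instance (d : ℕ) : MeasurableSpace (EuclideanSpace ℂ (Fin d)) := borel _
instance (d : ℕ) : BorelSpace (EuclideanSpace ℂ (Fin d)) := ⟨rfl⟩

lemma gram_quad_nonneg {N : ℕ} {ι : Type*} [Fintype ι] (v : Fin N → ι → ℂ) (e : Fin N → ℂ) :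
    0 ≤ ∑ i, ∑ j, e i * star (e j) * ∑ m, v i m * star (v j m) := by
  have h2 : ∀ i j, e i * star (e j) * ∑ m, v i m * star (v j m)
      = ∑ m, (e i * v i m) * star (e j * v j m) := fun i j => by
    rw [Finset.mul_sum]
    exact Finset.sum_congr rfl fun m _ => by rw [star_mul']; ring
  have key : (∑ i, ∑ j, e i * star (e j) * ∑ m, v i m * star (v j m))
      = ∑ m : ι, (∑ i, e i * v i m) * star (∑ j, e j * v j m) :=
    calc (∑ i, ∑ j, e i * star (e j) * ∑ m, v i m * star (v j m))
        = ∑ i, ∑ j, ∑ m, (e i * v i m) * star (e j * v j m) :=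
          Finset.sum_congr rfl fun i _ => Finset.sum_congr rfl fun j _ => h2 i j
      _ = ∑ i, ∑ m, ∑ j, (e i * v i m) * star (e j * v j m) :=
          Finset.sum_congr rfl fun i _ => Finset.sum_comm
      _ = ∑ m, ∑ i, ∑ j, (e i * v i m) * star (e j * v j m) := Finset.sum_comm
      _ = ∑ m : ι, (∑ i, e i * v i m) * star (∑ j, e j * v j m) :=
          Finset.sum_congr rfl fun m _ => by rw [star_sum, Finset.sum_mul_sum]
  rw [key]
  exact Finset.sum_nonneg fun m _ => mul_star_self_nonneg _

lemma exists_gram_pow {N : ℕ} {ι κ : Type} [Fintype ι] [Fintype κ]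
    (zz : Fin N → ι → ℂ) (uu : Fin N → κ → ℂ) (n : ℕ) :
    ∃ (σ : Type) (_ : Fintype σ) (v : Fin N → σ → ℂ), ∀ i j,
      (∑ m, zz i m * star (zz j m)) ^ n * (∑ m, uu i m * star (uu j m))
        = ∑ m, v i m * star (v j m) := by
  induction n with
  | zero => exact ⟨κ, inferInstance, uu, fun i j => by simp⟩
  | succ n ih =>
    obtain ⟨σ, hσ, v, hv⟩ := ih
    refine ⟨σ × ι, inferInstance, fun i p => v i p.1 * zz i p.2, fun i j => ?_⟩
    have : (∑ p : σ × ι, (v i p.1 * zz i p.2) * star (v j p.1 * zz j p.2))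
        = (∑ m, v i m * star (v j m)) * (∑ m, zz i m * star (zz j m)) := by
      rw [Finset.sum_mul_sum, Fintype.sum_prod_type]
      refine Finset.sum_congr rfl fun m _ => Finset.sum_congr rfl fun k _ => ?_
      rw [star_mul']
      ring
    rw [this, ← hv i j]
    ring

lemma hasSum_nonneg_c {F : ℕ → ℂ} {S : ℂ} (h : HasSum F S) (h0 : ∀ n, 0 ≤ F n) : 0 ≤ S := by
  have hre := Complex.hasSum_re h
  have him := Complex.hasSum_im h
  have h1 : 0 ≤ S.re := by
    refine hasSum_le (fun n => ?_) hasSum_zero hre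
    simpa using (Complex.le_def.mp (h0 n)).1
  have heq : (fun n => (F n).im) = fun _ : ℕ => (0:ℝ) := by
    funext n
    simpa using ((Complex.le_def.mp (h0 n)).2).symm
  rw [heq] at him
  have h2 : S.im = 0 := (him.unique hasSum_zero)
  rw [Complex.le_def]
  simp [h1, h2]

lemma pointwise_kernel_nonneg {N dd : ℕ} (zz : Fin N → Fin dd → ℂ) (ζ : Fin dd → ℂ)
    (hζ : ∑ m, ζ m * star (ζ m) = 1)
    (ha : ∀ i, ‖∑ m, zz i m * star (ζ m)‖ < 1)
    (hs : ∀ i j, ‖∑ m, zz i m * star (zz j m)‖ < 1)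
    (c : Fin N → ℂ) :
    0 ≤ ∑ i, ∑ j, c i * star (c j) *
      (((1 + ∑ m, zz i m * star (ζ m)) / (1 - ∑ m, zz i m * star (ζ m))
        + star ((1 + ∑ m, zz j m * star (ζ m)) / (1 - ∑ m, zz j m * star (ζ m))))
        / (1 - ∑ m, zz i m * star (zz j m))) := by
  set A : Fin N → ℂ := fun i => ∑ m, zz i m * star (ζ m) with hA
  set S : Fin N → Fin N → ℂ := fun i j => ∑ m, zz i m * star (zz j m) with hS
  have hA1 : ∀ i, (1 : ℂ) - A i ≠ 0 := by
    intro i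
    refine sub_ne_zero_of_ne fun h => ?_
    have h2 : ‖(1:ℂ)‖ < 1 := by rw [h]; exact ha i
    simp at h2
  have hA1' : ∀ j, (1 : ℂ) - star (A j) ≠ 0 := by
    intro j
    have : (1 : ℂ) - star (A j) = star (1 - A j) := by rw [star_sub, star_one]
    rw [this]
    exact star_ne_zero.mpr (hA1 j)
  have hS1 : ∀ i j, (1 : ℂ) - S i j ≠ 0 := by
    intro i j
    refine sub_ne_zero_of_ne fun h => ?_
    have h2 : ‖(1:ℂ)‖ < 1 := by rw [h]; exact hs i j
    simp at h2
  set e : Fin N → ℂ := fun i => c i / (1 - A i) with he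
  set u : Fin N → Fin dd → ℂ := fun i m => zz i m - A i * ζ m with hu
  -- Gram identity for p
  have hstarA : ∀ j, (∑ m, ζ m * star (zz j m)) = star (A j) := by
    intro j
    rw [hA]
    simp only [star_sum, star_mul', star_star]
    exact Finset.sum_congr rfl fun m _ => by ring
  have hP : ∀ i j, (∑ m, u i m * star (u j m)) = S i j - A i * star (A j) := by
    intro i j
    have expand : ∀ m, u i m * star (u j m)
        = zz i m * star (zz j m) - A i * (ζ m * star (zz j m))
          - star (A j) * (zz i m * star (ζ m)) + (A i * star (A j)) * (ζ m * star (ζ m)) := by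
      intro m
      simp only [hu, star_sub, star_mul', star_star]
      ring
    calc (∑ m, u i m * star (u j m))
        = ∑ m, (zz i m * star (zz j m) - A i * (ζ m * star (zz j m))
          - star (A j) * (zz i m * star (ζ m)) + (A i * star (A j)) * (ζ m * star (ζ m))) :=
          Finset.sum_congr rfl fun m _ => expand m
      _ = S i j - A i * (∑ m, ζ m * star (zz j m)) - star (A j) * A i
            + (A i * star (A j)) * ∑ m, ζ m * star (ζ m) := by
          rw [Finset.sum_add_distrib, Finset.sum_sub_distrib, Finset.sum_sub_distrib,
            ← Finset.mul_sum, ← Finset.mul_sum, ← Finset.mul_sum]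
      _ = S i j - A i * star (A j) := by rw [hstarA j, hζ]; ring
  -- term identity
  have hterm : ∀ i j, c i * star (c j) *
      (((1 + A i) / (1 - A i) + star ((1 + A j) / (1 - A j))) / (1 - S i j))
      = 2 * (e i * star (e j))
        + 2 * (e i * star (e j) * ((S i j - A i * star (A j)) * (1 - S i j)⁻¹)) := by
    intro i j
    have d1 := hA1 i
    have d2 : (1:ℂ) - (starRingEnd ℂ) (A j) ≠ 0 := hA1' j
    have d3 := hS1 i j
    rw [star_div₀, star_add, star_one, he]
    simp only
    rw [star_div₀, star_sub, star_one]
    field_simp [d1, d2, d3]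
    ring
  rw [Finset.sum_congr rfl fun i _ => Finset.sum_congr rfl fun j _ => hterm i j]
  rw [Finset.sum_congr rfl fun i (_ : i ∈ Finset.univ) => Finset.sum_add_distrib,
    Finset.sum_add_distrib]
  have part1 : 0 ≤ ∑ i, ∑ j, 2 * (e i * star (e j)) := by
    have : (∑ i, ∑ j, 2 * (e i * star (e j))) = 2 * ((∑ i, e i) * star (∑ i, e i)) := by
      rw [star_sum, Finset.sum_mul_sum]
      simp only [← Finset.mul_sum]
    rw [this]
    exact mul_nonneg (by norm_num) (mul_star_self_nonneg _)
  have part2 : 0 ≤ ∑ i, ∑ j, 2 * (e i * star (e j) * ((S i j - A i * star (A j)) * (1 - S i j)⁻¹)) := by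
    have hgeo : ∀ i j, HasSum (fun n : ℕ => 2 * (e i * star (e j) * (S i j ^ n * (S i j - A i * star (A j)))))
        (2 * (e i * star (e j) * ((S i j - A i * star (A j)) * (1 - S i j)⁻¹))) := by
      intro i j
      have h0 := (hasSum_geometric_of_norm_lt_one (hs i j)).mul_left
        (2 * (e i * star (e j) * (S i j - A i * star (A j))))
      have hfun : (fun n : ℕ => 2 * (e i * star (e j) * (S i j - A i * star (A j))) * S i j ^ n)
          = fun n : ℕ => 2 * (e i * star (e j) * (S i j ^ n * (S i j - A i * star (A j)))) :=
        funext fun n => by ring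
      rw [hfun] at h0
      have : 2 * (e i * star (e j) * (S i j - A i * star (A j))) * (1 - S i j)⁻¹
          = 2 * (e i * star (e j) * ((S i j - A i * star (A j)) * (1 - S i j)⁻¹)) := by ring
      rwa [this] at h0
    have hT : HasSum (fun n : ℕ => ∑ i, ∑ j, 2 * (e i * star (e j) * (S i j ^ n * (S i j - A i * star (A j)))))
        (∑ i, ∑ j, 2 * (e i * star (e j) * ((S i j - A i * star (A j)) * (1 - S i j)⁻¹))) :=
      hasSum_sum fun i _ => hasSum_sum fun j _ => hgeo i j
    refine hasSum_nonneg_c hT fun n => ?_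
    obtain ⟨σ, hσ, v, hv⟩ := exists_gram_pow zz u n
    have hQ : (∑ i, ∑ j, 2 * (e i * star (e j) * (S i j ^ n * (S i j - A i * star (A j)))))
        = 2 * ∑ i, ∑ j, e i * star (e j) * ∑ m, v i m * star (v j m) := by
      simp only [← Finset.mul_sum]
      congr 1
      refine Finset.sum_congr rfl fun i _ => Finset.sum_congr rfl fun j _ => ?_
      rw [← hP i j, ← hv i j]
    rw [hQ]
    exact mul_nonneg (by norm_num) (gram_quad_nonneg v e)
  exact add_nonneg part1 part2

open MeasureTheory

lemma integral_nonneg_complex {α : Type*} [MeasurableSpace α] (μ : Measure α) (G : α → ℂ)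
    (hpos : ∀ x, 0 ≤ G x) : 0 ≤ ∫ x, G x ∂μ := by
  have him : ∀ x, G x = (((G x).re : ℝ) : ℂ) := by
    intro x
    have h := Complex.le_def.mp (hpos x)
    exact Complex.ext (by simp) (by simpa using h.2.symm)
  calc (0:ℂ) ≤ ((∫ x, (G x).re ∂μ : ℝ) : ℂ) := by
        rw [Complex.zero_le_real]
        exact integral_nonneg fun x => by simpa using (Complex.le_def.mp (hpos x)).1
    _ = ∫ x, (((G x).re : ℝ) : ℂ) ∂μ := (integral_ofReal (𝕜 := ℂ)).symm
    _ = ∫ x, G x ∂μ :=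
        integral_congr_ae (Filter.Eventually.of_forall fun x => (him x).symm)

/-- every function in `M⁺` belongs to the positive Schur class
`S⁺`: if `f z = ∫ (1 + ⟨z,ζ⟩)/(1 - ⟨z,ζ⟩) dμ(ζ) + i t` for a finite positive
Borel measure `μ` on the sphere and `t ∈ ℝ`, then the kernel
`(f z + conj (f w))/(1 - ⟨z,w⟩)` is positive semidefinite on the ball. -/
theorem Mplus_subset_positive_schur_class
    (d : ℕ)
    (μ : Measure (Metric.sphere (0 : EuclideanSpace ℂ (Fin d)) 1))
    [IsFiniteMeasure μ] (t : ℝ)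
    (f : EuclideanSpace ℂ (Fin d) → ℂ)
    (hf : ∀ z ∈ Metric.ball (0 : EuclideanSpace ℂ (Fin d)) 1,
      f z = (∫ ζ : Metric.sphere (0 : EuclideanSpace ℂ (Fin d)) 1,
          (1 + ∑ m, z m * star ((ζ : EuclideanSpace ℂ (Fin d)) m)) /
            (1 - ∑ m, z m * star ((ζ : EuclideanSpace ℂ (Fin d)) m)) ∂μ) +
        (t : ℂ) * Complex.I)
    (n : ℕ) (z : Fin n → EuclideanSpace ℂ (Fin d))
    (hz : ∀ i, z i ∈ Metric.ball (0 : EuclideanSpace ℂ (Fin d)) 1)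
    (c : Fin n → ℂ) :
    0 ≤ ∑ i, ∑ j, c i * star (c j) *
        ((f (z i) + star (f (z j))) / (1 - ∑ m, z i m * star (z j m))) := by
  have hip : ∀ w v : EuclideanSpace ℂ (Fin d),
      (∑ m, w m * star (v m)) = (inner ℂ v w : ℂ) := by
    intro w v
    rw [PiLp.inner_apply]
    exact Finset.sum_congr rfl fun m _ => by rw [RCLike.inner_apply, RCLike.star_def]
  have hn : ∀ i, ‖z i‖ < 1 := fun i => mem_ball_zero_iff.mp (hz i)
  have hs : ∀ i j, ‖(∑ m, z i m * star (z j m) : ℂ)‖ < 1 := by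
    intro i j
    rw [hip]
    calc ‖(inner ℂ (z j) (z i) : ℂ)‖ ≤ ‖z j‖ * ‖z i‖ := norm_inner_le_norm _ _
      _ < 1 := by nlinarith [hn i, hn j, norm_nonneg (z j), norm_nonneg (z i)]
  have hζn : ∀ ζ : Metric.sphere (0 : EuclideanSpace ℂ (Fin d)) 1,
      ‖(ζ : EuclideanSpace ℂ (Fin d))‖ = 1 := fun ζ => mem_sphere_zero_iff_norm.mp ζ.2
  have ha : ∀ (ζ : Metric.sphere (0 : EuclideanSpace ℂ (Fin d)) 1) i,
      ‖(∑ m, z i m * star ((ζ : EuclideanSpace ℂ (Fin d)) m) : ℂ)‖ < 1 := by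
    intro ζ i
    rw [hip]
    calc ‖(inner ℂ (ζ : EuclideanSpace ℂ (Fin d)) (z i) : ℂ)‖
        ≤ ‖(ζ : EuclideanSpace ℂ (Fin d))‖ * ‖z i‖ := norm_inner_le_norm _ _
      _ < 1 := by rw [hζn ζ, one_mul]; exact hn i
  have hA1 : ∀ (ζ : Metric.sphere (0 : EuclideanSpace ℂ (Fin d)) 1) i,
      (1:ℂ) - ∑ m, z i m * star ((ζ : EuclideanSpace ℂ (Fin d)) m) ≠ 0 := by
    intro ζ i
    refine sub_ne_zero_of_ne fun h => ?_
    have h2 : ‖(1:ℂ)‖ < 1 := by rw [h]; exact ha ζ i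
    simp at h2
  have hζ1 : ∀ ζ : Metric.sphere (0 : EuclideanSpace ℂ (Fin d)) 1,
      (∑ m, (ζ : EuclideanSpace ℂ (Fin d)) m * star ((ζ : EuclideanSpace ℂ (Fin d)) m)) = 1 := by
    intro ζ
    rw [hip, inner_self_eq_norm_sq_to_K, hζn ζ]
    norm_num
  set B : Fin n → (Metric.sphere (0 : EuclideanSpace ℂ (Fin d)) 1) → ℂ := fun i ζ =>
    (1 + ∑ m, z i m * star ((ζ : EuclideanSpace ℂ (Fin d)) m)) /
      (1 - ∑ m, z i m * star ((ζ : EuclideanSpace ℂ (Fin d)) m)) with hB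
  have hAcont : ∀ i, Continuous (fun ζ : Metric.sphere (0 : EuclideanSpace ℂ (Fin d)) 1 =>
      (∑ m, z i m * star ((ζ : EuclideanSpace ℂ (Fin d)) m) : ℂ)) := by
    intro i
    have heq : (fun ζ : Metric.sphere (0 : EuclideanSpace ℂ (Fin d)) 1 =>
        (∑ m, z i m * star ((ζ : EuclideanSpace ℂ (Fin d)) m) : ℂ))
        = fun ζ : Metric.sphere (0 : EuclideanSpace ℂ (Fin d)) 1 =>
          (inner ℂ (ζ : EuclideanSpace ℂ (Fin d)) (z i) : ℂ) :=
      funext fun ζ => hip (z i) (ζ : EuclideanSpace ℂ (Fin d))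
    rw [heq]
    exact Continuous.inner continuous_subtype_val continuous_const
  have hBc : ∀ i, Continuous (B i) := fun i =>
    (continuous_const.add (hAcont i)).div (continuous_const.sub (hAcont i)) fun ζ => hA1 ζ i
  have hBint : ∀ i, Integrable (B i) μ := fun i =>
    (hBc i).integrable_of_hasCompactSupport (HasCompactSupport.of_compactSpace _)
  have hBsint : ∀ j, Integrable (fun ζ => star (B j ζ)) μ := fun j =>
    ((hBc j).star).integrable_of_hasCompactSupport (HasCompactSupport.of_compactSpace _)
  have key : ∀ i j, c i * star (c j) *
      ((f (z i) + star (f (z j))) / (1 - ∑ m, z i m * star (z j m)))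
      = ∫ ζ, c i * star (c j) *
          ((B i ζ + star (B j ζ)) / (1 - ∑ m, z i m * star (z j m))) ∂μ := by
    intro i j
    have hstar : star (f (z j)) = (∫ ζ, star (B j ζ) ∂μ) - (t:ℂ) * Complex.I := by
      rw [hf (z j) (hz j), star_add, sub_eq_add_neg]
      congr 1
      · exact (integral_conj (f := fun ζ => B j ζ)).symm
      · rw [star_mul', Complex.star_def, Complex.conj_I, Complex.conj_ofReal]
        ring
    have hadd : f (z i) + star (f (z j)) = ∫ ζ, (B i ζ + star (B j ζ)) ∂μ := by
      rw [hf (z i) (hz i), hstar, integral_add (hBint i) (hBsint j)]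
      ring
    rw [hadd]
    calc c i * star (c j) * ((∫ ζ, (B i ζ + star (B j ζ)) ∂μ) / (1 - ∑ m, z i m * star (z j m)))
        = (c i * star (c j) / (1 - ∑ m, z i m * star (z j m)))
            * ∫ ζ, (B i ζ + star (B j ζ)) ∂μ := by ring
      _ = ∫ ζ, (c i * star (c j) / (1 - ∑ m, z i m * star (z j m)))
            * (B i ζ + star (B j ζ)) ∂μ := (integral_const_mul _ _).symm
      _ = ∫ ζ, c i * star (c j) *
            ((B i ζ + star (B j ζ)) / (1 - ∑ m, z i m * star (z j m))) ∂μ :=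
          integral_congr_ae (Filter.Eventually.of_forall fun ζ => by ring)
  have hgint : ∀ i j, Integrable (fun ζ => c i * star (c j) *
      ((B i ζ + star (B j ζ)) / (1 - ∑ m, z i m * star (z j m)))) μ := by
    intro i j
    refine Continuous.integrable_of_hasCompactSupport ?_ (HasCompactSupport.of_compactSpace _)
    exact continuous_const.mul (((hBc i).add ((hBc j).star)).div_const _)
  rw [Finset.sum_congr rfl fun i (_ : i ∈ Finset.univ) =>
    Finset.sum_congr rfl fun j (_ : j ∈ Finset.univ) => key i j]
  rw [Finset.sum_congr rfl fun i (_ : i ∈ Finset.univ) =>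
    (integral_finset_sum Finset.univ fun j _ => hgint i j).symm]
  rw [← integral_finset_sum Finset.univ fun i _ =>
    integrable_finset_sum Finset.univ fun j _ => hgint i j]
  refine integral_nonneg_complex μ _ fun ζ => ?_
  exact pointwise_kernel_nonneg (fun i m => z i m)
    (fun m => (ζ : EuclideanSpace ℂ (Fin d)) m) (hζ1 ζ) (fun i => ha ζ i) hs c
end
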